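/- If two nodes v1 ∈ G1 and v2 ∈ G2 (graphs from a class of graphs with at most N nodes each) satisfy exactly the same FOC2 formulas of quantifier depth at most L, then for every R²-GNN with at most L layers, v1 and v2 receive the same output feature vector. -/

import Mathlib

inductive Var : Type
  | x | y
deriving DecidableEq

structure MultiRelGraph (P1 P2 : Type) where
  V : Type
  [fintV : Fintype V]
  [decV : DecidableEq V]
  unary : P1 → V → Prop
  rel : P2 → V → V → Prop
  [decU : ∀ p, DecidablePred (unary p)]
  [decR : ∀ r, DecidableRel (rel r)]

attribute [instance] MultiRelGraph.fintV MultiRelGraph.decV MultiRelGraph.decU MultiRelGraph.decR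

inductive FOC2 (P1 P2 : Type) : Type
  | tru : FOC2 P1 P2
  | atom : P1 → Var → FOC2 P1 P2
  | rel : P2 → Var → Var → FOC2 P1 P2
  | and : FOC2 P1 P2 → FOC2 P1 P2 → FOC2 P1 P2
  | or : FOC2 P1 P2 → FOC2 P1 P2 → FOC2 P1 P2
  | not : FOC2 P1 P2 → FOC2 P1 P2
  | exge : ℕ → Var → FOC2 P1 P2 → FOC2 P1 P2

variable {P1 P2 : Type}

/-- Satisfaction of a `FOC2` formula in a multi-relational graph under an assignment. -/
def MultiRelGraph.sat (G : MultiRelGraph P1 P2) : (Var → G.V) → FOC2 P1 P2 → Prop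
  | _, .tru => True
  | σ, .atom p v => G.unary p (σ v)
  | σ, .rel r u w => G.rel r (σ u) (σ w)
  | σ, .and φ ψ => G.sat σ φ ∧ G.sat σ ψ
  | σ, .or φ ψ => G.sat σ φ ∨ G.sat σ ψ
  | σ, .not φ => ¬ G.sat σ φ
  | σ, .exge n v φ => ∃ S : Finset G.V, S.card = n ∧ ∀ a ∈ S, G.sat (Function.update σ v a) φ

/-- Quantifier depth. -/
def FOC2.depth : FOC2 P1 P2 → ℕ
  | .tru => 0
  | .atom _ _ => 0
  | .rel _ _ _ => 0
  | .and φ ψ => max φ.depth ψ.depth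
  | .or φ ψ => max φ.depth ψ.depth
  | .not φ => φ.depth
  | .exge _ _ φ => φ.depth + 1

/-- All counting thresholds are at most `m`. -/
def FOC2.thresholdsLe (m : ℕ) : FOC2 P1 P2 → Prop
  | .tru => True
  | .atom _ _ => True
  | .rel _ _ _ => True
  | .and φ ψ => φ.thresholdsLe m ∧ ψ.thresholdsLe m
  | .or φ ψ => φ.thresholdsLe m ∧ ψ.thresholdsLe m
  | .not φ => φ.thresholdsLe m
  | .exge n _ φ => n ≤ m ∧ φ.thresholdsLe m

/-- Free variables. -/
def FOC2.freeVars : FOC2 P1 P2 → Finset Var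
  | .tru => ∅
  | .atom _ v => {v}
  | .rel _ u w => {u, w}
  | .and φ ψ => φ.freeVars ∪ ψ.freeVars
  | .or φ ψ => φ.freeVars ∪ ψ.freeVars
  | .not φ => φ.freeVars
  | .exge _ v φ => φ.freeVars \ {v}

/-- Parse-tree size. -/
def FOC2.size : FOC2 P1 P2 → ℕ
  | .tru => 1
  | .atom _ _ => 1
  | .rel _ _ _ => 1
  | .and φ ψ => φ.size + ψ.size + 1
  | .or φ ψ => φ.size + ψ.size + 1
  | .not φ => φ.size + 1
  | .exge _ _ φ => φ.size + 1

/-- A generic R²-GNN run: per-layer combination functions taking the node's previous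
feature, for each relation the multiset of neighbours' features, and the global multiset. -/
def runGNN (G : MultiRelGraph P1 P2) {X : Type} (h0 : G.V → X)
    (C : ℕ → X → (P2 → Multiset X) → Multiset X → X) : ℕ → G.V → X
  | 0, v => h0 v
  | i + 1, v =>
    C i (runGNN G h0 C i v)
      (fun r => (Finset.univ.filter (fun u => G.rel r v u)).val.map (runGNN G h0 C i))
      (Finset.univ.val.map (runGNN G h0 C i))


open Finset

variable {P1 P2 : Type}

/-- Swap the two variables. -/
def Var.swap : Var → Var
  | Var.x => Var.y
  | Var.y => Var.x

def FOC2.swap : FOC2 P1 P2 → FOC2 P1 P2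
  | .tru => .tru
  | .atom p v => .atom p (Var.swap v)
  | .rel r u w => .rel r (Var.swap u) (Var.swap w)
  | .and φ ψ => .and φ.swap ψ.swap
  | .or φ ψ => .or φ.swap ψ.swap
  | .not φ => .not φ.swap
  | .exge n v φ => .exge n (Var.swap v) φ.swap

lemma update_comp_swap {α : Type} (σ : Var → α) (v : Var) (a : α) :
    (Function.update σ (Var.swap v) a) ∘ Var.swap = Function.update (σ ∘ Var.swap) v a := by
  funext w
  cases v <;> cases w <;> simp [Var.swap, Function.update]

lemma sat_swap (G : MultiRelGraph P1 P2) (φ : FOC2 P1 P2) :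
    ∀ σ : Var → G.V, (G.sat σ φ.swap ↔ G.sat (σ ∘ Var.swap) φ) := by
  induction φ with intro σ
  | tru => simp [MultiRelGraph.sat, FOC2.swap]
  | atom p v => simp [MultiRelGraph.sat, FOC2.swap, Function.comp]
  | rel r u w => simp [MultiRelGraph.sat, FOC2.swap, Function.comp]
  | and φ ψ ihφ ihψ => simp [MultiRelGraph.sat, FOC2.swap, ihφ, ihψ]
  | or φ ψ ihφ ihψ => simp [MultiRelGraph.sat, FOC2.swap, ihφ, ihψ]
  | not φ ih => simp [MultiRelGraph.sat, FOC2.swap, ih]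
  | exge n v φ ih =>
    simp only [MultiRelGraph.sat, FOC2.swap]
    constructor
    · rintro ⟨S, hS, hall⟩
      exact ⟨S, hS, fun a ha => by
        rw [← update_comp_swap]; exact (ih _).1 (hall a ha)⟩
    · rintro ⟨S, hS, hall⟩
      exact ⟨S, hS, fun a ha => (ih _).2 (by rw [update_comp_swap]; exact hall a ha)⟩

lemma depth_swap (φ : FOC2 P1 P2) : φ.swap.depth = φ.depth := by
  induction φ <;> simp [FOC2.swap, FOC2.depth, *]

lemma swap_injective : Function.Injective Var.swap := by
  intro a b h; cases a <;> cases b <;> simp_all [Var.swap]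

lemma freeVars_swap (φ : FOC2 P1 P2) : φ.swap.freeVars = φ.freeVars.image Var.swap := by
  induction φ with
  | tru => simp [FOC2.swap, FOC2.freeVars]
  | atom p v => simp [FOC2.swap, FOC2.freeVars]
  | rel r u w => simp [FOC2.swap, FOC2.freeVars, Finset.image_insert]
  | and φ ψ ihφ ihψ => simp [FOC2.swap, FOC2.freeVars, ihφ, ihψ, Finset.image_union]
  | or φ ψ ihφ ihψ => simp [FOC2.swap, FOC2.freeVars, ihφ, ihψ, Finset.image_union]
  | not φ ih => simp [FOC2.swap, FOC2.freeVars, ih]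
  | exge n v φ ih =>
    simp [FOC2.swap, FOC2.freeVars, ih, Finset.image_sdiff _ _ swap_injective]

lemma freeVars_swap_subset {φ : FOC2 P1 P2} (h : φ.freeVars ⊆ {Var.x}) :
    φ.swap.freeVars ⊆ {Var.y} := by
  rw [freeVars_swap]
  intro v hv
  obtain ⟨w, hw, rfl⟩ := Finset.mem_image.1 hv
  have := h hw
  simp only [Finset.mem_singleton] at this ⊢
  subst this; rfl

lemma sat_congr (G : MultiRelGraph P1 P2) (φ : FOC2 P1 P2) :
    ∀ σ σ' : Var → G.V, (∀ v ∈ φ.freeVars, σ v = σ' v) → (G.sat σ φ ↔ G.sat σ' φ) := by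
  induction φ with intro σ σ' h
  | tru => simp [MultiRelGraph.sat]
  | atom p v =>
    simp only [MultiRelGraph.sat]
    rw [h v (by simp [FOC2.freeVars])]
  | rel r u w =>
    simp only [MultiRelGraph.sat]
    rw [h u (by simp [FOC2.freeVars]), h w (by simp [FOC2.freeVars])]
  | and φ ψ ihφ ihψ =>
    simp only [MultiRelGraph.sat]
    rw [ihφ _ _ (fun v hv => h v (by simp [FOC2.freeVars, hv])),
        ihψ _ _ (fun v hv => h v (by simp [FOC2.freeVars, hv]))]
  | or φ ψ ihφ ihψ =>
    simp only [MultiRelGraph.sat]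
    rw [ihφ _ _ (fun v hv => h v (by simp [FOC2.freeVars, hv])),
        ihψ _ _ (fun v hv => h v (by simp [FOC2.freeVars, hv]))]
  | not φ ih =>
    simp only [MultiRelGraph.sat]
    rw [ih _ _ (fun v hv => h v (by simpa [FOC2.freeVars] using hv))]
  | exge n v φ ih =>
    simp only [MultiRelGraph.sat]
    constructor <;> rintro ⟨S, hS, hall⟩ <;> refine ⟨S, hS, fun a ha => ?_⟩
    · exact (ih _ _ (fun w hw => by
        rcases eq_or_ne w v with rfl | hne
        · simp [Function.update]
        · simp only [Function.update_of_ne hne]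
          exact h w (by simp [FOC2.freeVars, hw, hne]))).1 (hall a ha)
    · exact (ih _ _ (fun w hw => by
        rcases eq_or_ne w v with rfl | hne
        · simp [Function.update]
        · simp only [Function.update_of_ne hne]
          exact (h w (by simp [FOC2.freeVars, hw, hne])).symm)).1 (hall a ha)

open Classical in
lemma sat_exge_iff (G : MultiRelGraph P1 P2) (σ : Var → G.V) (n : ℕ) (v : Var) (φ : FOC2 P1 P2) :
    G.sat σ (.exge n v φ) ↔
      n ≤ (Finset.univ.filter (fun a => G.sat (Function.update σ v a) φ)).card := by
  constructor
  · rintro ⟨S, hS, hall⟩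
    calc n = S.card := hS.symm
    _ ≤ _ := Finset.card_le_card (fun a ha => Finset.mem_filter.2 ⟨Finset.mem_univ a, hall a ha⟩)
  · intro h
    obtain ⟨S, hsub, hcard⟩ := Finset.exists_subset_card_eq h
    exact ⟨S, hcard, fun a ha => (Finset.mem_filter.1 (hsub ha)).2⟩


/-- The depth-`k` theory of a node: formulas of depth ≤ k with free vars ⊆ {x} it satisfies. -/
def theory (G : MultiRelGraph P1 P2) (k : ℕ) (u : G.V) : Set (FOC2 P1 P2) :=
  {φ | φ.depth ≤ k ∧ φ.freeVars ⊆ {Var.x} ∧ G.sat (fun _ => u) φ}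

lemma sat_of_theory_eq {G G' : MultiRelGraph P1 P2} {k : ℕ} {a : G.V} {b : G'.V}
    (h : theory G k a = theory G' k b) {φ : FOC2 P1 P2}
    (hd : φ.depth ≤ k) (hf : φ.freeVars ⊆ {Var.x}) :
    G.sat (fun _ => a) φ ↔ G'.sat (fun _ => b) φ := by
  constructor
  · intro hs
    have : φ ∈ theory G k a := ⟨hd, hf, hs⟩
    rw [h] at this; exact this.2.2
  · intro hs
    have : φ ∈ theory G' k b := ⟨hd, hf, hs⟩
    rw [← h] at this; exact this.2.2

lemma exists_sep (GA GB : MultiRelGraph P1 P2) (k : ℕ) (a : GA.V) (b : GB.V)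
    (h : theory GA k a ≠ theory GB k b) :
    ∃ φ : FOC2 P1 P2, φ.depth ≤ k ∧ φ.freeVars ⊆ {Var.x} ∧
      GA.sat (fun _ => a) φ ∧ ¬ GB.sat (fun _ => b) φ := by
  by_contra hc
  push_neg at hc
  apply h
  ext φ
  constructor
  · rintro ⟨hd, hf, hs⟩
    exact ⟨hd, hf, hc φ hd hf hs⟩
  · rintro ⟨hd, hf, hs⟩
    refine ⟨hd, hf, ?_⟩
    by_contra hns
    exact hc (.not φ) hd hf hns hs

def conj : List (FOC2 P1 P2) → FOC2 P1 P2
  | [] => .tru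
  | φ :: l => .and φ (conj l)

lemma sat_conj (G : MultiRelGraph P1 P2) (σ : Var → G.V) :
    ∀ l : List (FOC2 P1 P2), (G.sat σ (conj l) ↔ ∀ φ ∈ l, G.sat σ φ) := by
  intro l
  induction l with
  | nil => simp [conj, MultiRelGraph.sat]
  | cons φ l ih => simp [conj, MultiRelGraph.sat, ih]

lemma depth_conj {k : ℕ} : ∀ l : List (FOC2 P1 P2), (∀ φ ∈ l, FOC2.depth φ ≤ k) →
    (conj l).depth ≤ k := by
  intro l
  induction l with
  | nil => simp [conj, FOC2.depth]
  | cons φ l ih =>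
    intro h
    simp only [conj, FOC2.depth, max_le_iff]
    exact ⟨h φ (by simp), ih (fun ψ hψ => h ψ (by simp [hψ]))⟩

lemma fv_conj {s : Finset Var} : ∀ l : List (FOC2 P1 P2), (∀ φ ∈ l, FOC2.freeVars φ ⊆ s) →
    (conj l).freeVars ⊆ s := by
  intro l
  induction l with
  | nil => simp [conj, FOC2.freeVars]
  | cons φ l ih =>
    intro h
    simp only [conj, FOC2.freeVars, Finset.union_subset_iff]
    exact ⟨h φ (by simp), ih (fun ψ hψ => h ψ (by simp [hψ]))⟩

open Classical in
lemma exists_char (G G' GA : MultiRelGraph P1 P2) (k : ℕ) (a0 : GA.V) :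
    ∃ χ : FOC2 P1 P2, χ.depth ≤ k ∧ χ.freeVars ⊆ {Var.x} ∧
      (∀ w : G.V, (G.sat (fun _ => w) χ ↔ theory G k w = theory GA k a0)) ∧
      (∀ w : G'.V, (G'.sat (fun _ => w) χ ↔ theory G' k w = theory GA k a0)) := by
  classical
  set t := theory GA k a0 with ht
  have sep : ∀ (GB : MultiRelGraph P1 P2) (w : GB.V), ∃ φ : FOC2 P1 P2,
      (theory GB k w ≠ t → φ.depth ≤ k ∧ φ.freeVars ⊆ {Var.x} ∧
        GA.sat (fun _ => a0) φ ∧ ¬ GB.sat (fun _ => w) φ) ∧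
      (theory GB k w = t → φ = .tru) := by
    intro GB w
    by_cases h : theory GB k w = t
    · exact ⟨.tru, fun hne => absurd h hne, fun _ => rfl⟩
    · obtain ⟨φ, h1, h2, h3, h4⟩ := exists_sep GA GB k a0 w (fun he => h he.symm)
      exact ⟨φ, fun _ => ⟨h1, h2, h3, h4⟩, fun he => absurd he h⟩
  choose g hg hg' using sep
  set l : List (FOC2 P1 P2) :=
    ((Finset.univ : Finset G.V).toList.map (g G)) ++
      ((Finset.univ : Finset G'.V).toList.map (g G')) with hl
  have hmem : ∀ φ ∈ l, φ.depth ≤ k ∧ φ.freeVars ⊆ {Var.x} ∧ GA.sat (fun _ => a0) φ := by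
    intro φ hφ
    simp only [hl, List.mem_append, List.mem_map] at hφ
    rcases hφ with ⟨w, _, rfl⟩ | ⟨w, _, rfl⟩ <;>
    · by_cases h : theory _ k w = t
      · rw [hg' _ w h]
        exact ⟨by simp [FOC2.depth], by simp [FOC2.freeVars], by trivial⟩
      · obtain ⟨h1, h2, h3, _⟩ := hg _ w h
        exact ⟨h1, h2, h3⟩
  refine ⟨conj l, depth_conj l (fun φ hφ => (hmem φ hφ).1),
    fv_conj l (fun φ hφ => (hmem φ hφ).2.1), ?_, ?_⟩
  · intro w
    rw [sat_conj]
    constructor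
    · intro hall
      by_contra hne
      obtain ⟨_, _, _, h4⟩ := hg G w hne
      exact h4 (hall (g G w) (by simp [hl]))
    · intro he φ hφ
      obtain ⟨h1, h2, h3⟩ := hmem φ hφ
      exact (sat_of_theory_eq (G := G) (G' := GA) he h1 h2).2 h3
  · intro w
    rw [sat_conj]
    constructor
    · intro hall
      by_contra hne
      obtain ⟨_, _, _, h4⟩ := hg G' w hne
      exact h4 (hall (g G' w) (by simp [hl]))
    · intro he φ hφ
      obtain ⟨h1, h2, h3⟩ := hmem φ hφ
      exact (sat_of_theory_eq (G := G') (G' := GA) he h1 h2).2 h3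
open Classical in
lemma count_rel (G : MultiRelGraph P1 P2) (u : G.V) (r : P2) (χ : FOC2 P1 P2)
    (hfv : χ.freeVars ⊆ {Var.x}) (j : ℕ) :
    G.sat (fun _ => u) (.exge j .y (.and (.rel r .x .y) χ.swap)) ↔
      j ≤ (Finset.univ.filter (fun a => G.rel r u a ∧ G.sat (fun _ => a) χ)).card := by
  rw [sat_exge_iff]
  have heq : ∀ a : G.V,
      G.sat (Function.update (fun _ => u) Var.y a) (.and (.rel r .x .y) χ.swap) ↔
      (G.rel r u a ∧ G.sat (fun _ => a) χ) := by
    intro a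
    simp only [MultiRelGraph.sat]
    constructor
    · rintro ⟨h1, h2⟩
      refine ⟨by simpa [Function.update] using h1, ?_⟩
      rw [sat_swap] at h2
      refine (sat_congr G χ _ _ ?_).1 h2
      intro v hv
      have := hfv hv
      simp only [Finset.mem_singleton] at this
      subst this
      simp [Function.comp, Var.swap, Function.update]
    · rintro ⟨h1, h2⟩
      refine ⟨by simpa [Function.update] using h1, ?_⟩
      rw [sat_swap]
      refine (sat_congr G χ _ _ ?_).2 h2
      intro v hv
      have := hfv hv
      simp only [Finset.mem_singleton] at this
      subst this
      simp [Function.comp, Var.swap, Function.update]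
  have : (Finset.univ.filter
      (fun a => G.sat (Function.update (fun _ => u) Var.y a) (.and (.rel r .x .y) χ.swap))) =
      (Finset.univ.filter (fun a => G.rel r u a ∧ G.sat (fun _ => a) χ)) := by
    apply Finset.filter_congr
    intro a _
    simp [heq a]
  rw [this]

open Classical in
lemma count_glob (G : MultiRelGraph P1 P2) (u : G.V) (χ : FOC2 P1 P2)
    (hfv : χ.freeVars ⊆ {Var.x}) (j : ℕ) :
    G.sat (fun _ => u) (.exge j .y χ.swap) ↔
      j ≤ (Finset.univ.filter (fun a => G.sat (fun _ => a) χ)).card := by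
  rw [sat_exge_iff]
  have : (Finset.univ.filter
      (fun a => G.sat (Function.update (fun _ => u) Var.y a) χ.swap)) =
      (Finset.univ.filter (fun a => G.sat (fun _ => a) χ)) := by
    apply Finset.filter_congr
    intro a _
    rw [sat_swap]
    apply sat_congr
    intro v hv
    have := hfv hv
    simp only [Finset.mem_singleton] at this
    subst this
    simp [Function.comp, Var.swap, Function.update]
  rw [this]

lemma depth_count_rel (r : P2) (χ : FOC2 P1 P2) (j : ℕ) :
    (FOC2.exge j Var.y (.and (.rel r .x .y) χ.swap) : FOC2 P1 P2).depth = χ.depth + 1 := by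
  simp [FOC2.depth, depth_swap]

lemma fv_count_rel (r : P2) (χ : FOC2 P1 P2) (hfv : χ.freeVars ⊆ {Var.x}) (j : ℕ) :
    (FOC2.exge j Var.y (.and (.rel r .x .y) χ.swap) : FOC2 P1 P2).freeVars ⊆ {Var.x} := by
  have h := freeVars_swap_subset hfv
  simp only [FOC2.freeVars]
  intro v hv
  simp only [Finset.mem_sdiff, Finset.mem_union, Finset.mem_singleton, Finset.mem_insert] at hv
  rcases hv with ⟨h1 | h2, hne⟩
  · rcases h1 with rfl | h1
    · simp
    · exact absurd h1 hne
  · have := h h2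
    simp only [Finset.mem_singleton] at this
    exact absurd this hne

lemma fv_count_glob (χ : FOC2 P1 P2) (hfv : χ.freeVars ⊆ {Var.x}) (j : ℕ) :
    (FOC2.exge j Var.y χ.swap : FOC2 P1 P2).freeVars ⊆ {Var.x} := by
  have h := freeVars_swap_subset hfv
  simp only [FOC2.freeVars]
  intro v hv
  simp only [Finset.mem_sdiff, Finset.mem_singleton] at hv
  obtain ⟨h1, hne⟩ := hv
  have := h h1
  simp only [Finset.mem_singleton] at this
  exact absurd this hne
open Classical in
lemma key (k : ℕ) :
    ∀ (G G' : MultiRelGraph P1 P2) (u : G.V) (u' : G'.V),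
      (∀ φ : FOC2 P1 P2, φ.depth ≤ k → φ.freeVars ⊆ {Var.x} →
        (G.sat (fun _ => u) φ ↔ G'.sat (fun _ => u') φ)) →
      ∀ (X : Type) (ι : (P1 → Bool) → X)
        (C : ℕ → X → (P2 → Multiset X) → Multiset X → X),
        runGNN G (fun a => ι (fun p => decide (G.unary p a))) C k u =
          runGNN G' (fun a => ι (fun p => decide (G'.unary p a))) C k u' := by
  induction k with
  | zero =>
    intro G G' u u' hiff X ι C
    simp only [runGNN]
    congr 1
    funext p
    have := hiff (.atom p .x) (by simp [FOC2.depth]) (by simp [FOC2.freeVars])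
    simp only [MultiRelGraph.sat] at this
    exact decide_eq_decide.mpr this
  | succ k ih =>
    intro G G' u u' hiff X ι C
    classical
    have hk : ∀ φ : FOC2 P1 P2, φ.depth ≤ k → φ.freeVars ⊆ {Var.x} →
        (G.sat (fun _ => u) φ ↔ G'.sat (fun _ => u') φ) :=
      fun φ hd hfv => hiff φ (hd.trans (Nat.le_succ k)) hfv
    simp only [runGNN]
    set f : G.V → X := runGNN G (fun a => ι (fun p => decide (G.unary p a))) C k with hfdef
    set f' : G'.V → X := runGNN G' (fun a => ι (fun p => decide (G'.unary p a))) C k with hfdef'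
    have hth : ∀ (Ga Gb : MultiRelGraph P1 P2) (a : Ga.V) (b : Gb.V),
        theory Ga k a = theory Gb k b →
        runGNN Ga (fun w => ι (fun p => decide (Ga.unary p w))) C k a =
        runGNN Gb (fun w => ι (fun p => decide (Gb.unary p w))) C k b :=
      fun Ga Gb a b h => ih Ga Gb a b (fun φ hd hfv => sat_of_theory_eq h hd hfv) X ι C
    set F : Set (FOC2 P1 P2) → X := fun t =>
      if h : ∃ a : G.V, theory G k a = t then f h.choose
      else if h' : ∃ b : G'.V, theory G' k b = t then f' h'.choose
      else f u with hFdef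
    have hFa : ∀ a : G.V, f a = F (theory G k a) := by
      intro a
      have h : ∃ a' : G.V, theory G k a' = theory G k a := ⟨a, rfl⟩
      simp only [hFdef, dif_pos h]
      exact (hth G G h.choose a h.choose_spec).symm
    have hFb : ∀ b : G'.V, f' b = F (theory G' k b) := by
      intro b
      by_cases h : ∃ a : G.V, theory G k a = theory G' k b
      · simp only [hFdef, dif_pos h]
        exact (hth G G' h.choose b h.choose_spec).symm
      · have h' : ∃ b' : G'.V, theory G' k b' = theory G' k b := ⟨b, rfl⟩
        simp only [hFdef, dif_neg h, dif_pos h']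
        exact (hth G' G' h'.choose b h'.choose_spec).symm
    -- count equality for each theory class
    have hcount : ∀ t : Set (FOC2 P1 P2),
        (∀ r : P2,
          (Finset.univ.filter (fun a : G.V => G.rel r u a ∧ t = theory G k a)).card =
          (Finset.univ.filter (fun b : G'.V => G'.rel r u' b ∧ t = theory G' k b)).card) ∧
        ((Finset.univ.filter (fun a : G.V => t = theory G k a)).card =
          (Finset.univ.filter (fun b : G'.V => t = theory G' k b)).card) := by
      intro t
      by_cases hreal : (∃ a0 : G.V, theory G k a0 = t) ∨ (∃ b0 : G'.V, theory G' k b0 = t)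
      · obtain ⟨χ, hχd, hχf, hχG, hχG'⟩ : ∃ χ : FOC2 P1 P2, χ.depth ≤ k ∧
            χ.freeVars ⊆ {Var.x} ∧
            (∀ w : G.V, (G.sat (fun _ => w) χ ↔ theory G k w = t)) ∧
            (∀ w : G'.V, (G'.sat (fun _ => w) χ ↔ theory G' k w = t)) := by
          rcases hreal with ⟨a0, ha0⟩ | ⟨b0, hb0⟩
          · obtain ⟨χ, h1, h2, h3, h4⟩ := exists_char G G' G k a0
            exact ⟨χ, h1, h2, by simpa [ha0] using h3, by simpa [ha0] using h4⟩
          · obtain ⟨χ, h1, h2, h3, h4⟩ := exists_char G G' G' k b0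
            exact ⟨χ, h1, h2, by simpa [hb0] using h3, by simpa [hb0] using h4⟩
        constructor
        · intro r
          have e1 : (Finset.univ.filter (fun a : G.V => G.rel r u a ∧ t = theory G k a)) =
              (Finset.univ.filter (fun a => G.rel r u a ∧ G.sat (fun _ => a) χ)) :=
            Finset.filter_congr (fun a _ =>
              and_congr Iff.rfl (by rw [hχG a, eq_comm]))
          have e2 : (Finset.univ.filter (fun b : G'.V => G'.rel r u' b ∧ t = theory G' k b)) =
              (Finset.univ.filter (fun b => G'.rel r u' b ∧ G'.sat (fun _ => b) χ)) :=
            Finset.filter_congr (fun b _ =>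
              and_congr Iff.rfl (by rw [hχG' b, eq_comm]))
          rw [e1, e2]
          have hj : ∀ j : ℕ,
              (j ≤ (Finset.univ.filter
                  (fun a : G.V => G.rel r u a ∧ G.sat (fun _ => a) χ)).card ↔
               j ≤ (Finset.univ.filter
                  (fun b : G'.V => G'.rel r u' b ∧ G'.sat (fun _ => b) χ)).card) := by
            intro j
            rw [← count_rel G u r χ hχf j, ← count_rel G' u' r χ hχf j]
            exact hiff _ (by rw [depth_count_rel]; exact Nat.succ_le_succ hχd)
              (fv_count_rel r χ hχf j)
          exact le_antisymm ((hj _).1 le_rfl) ((hj _).2 le_rfl)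
        · have e1 : (Finset.univ.filter (fun a : G.V => t = theory G k a)) =
              (Finset.univ.filter (fun a => G.sat (fun _ => a) χ)) :=
            Finset.filter_congr (fun a _ => by rw [hχG a, eq_comm])
          have e2 : (Finset.univ.filter (fun b : G'.V => t = theory G' k b)) =
              (Finset.univ.filter (fun b => G'.sat (fun _ => b) χ)) :=
            Finset.filter_congr (fun b _ => by rw [hχG' b, eq_comm])
          rw [e1, e2]
          have hj : ∀ j : ℕ,
              (j ≤ (Finset.univ.filter (fun a : G.V => G.sat (fun _ => a) χ)).card ↔
               j ≤ (Finset.univ.filter (fun b : G'.V => G'.sat (fun _ => b) χ)).card) := by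
            intro j
            rw [← count_glob G u χ hχf j, ← count_glob G' u' χ hχf j]
            refine hiff _ ?_ (fv_count_glob χ hχf j)
            show (FOC2.exge j Var.y χ.swap : FOC2 P1 P2).depth ≤ k + 1
            simp only [FOC2.depth, depth_swap]
            exact Nat.succ_le_succ hχd
          exact le_antisymm ((hj _).1 le_rfl) ((hj _).2 le_rfl)
      · push_neg at hreal
        obtain ⟨hna, hnb⟩ := hreal
        constructor
        · intro r
          rw [Finset.filter_false_of_mem (fun a _ => by
              rintro ⟨-, h⟩; exact hna a h.symm),
            Finset.filter_false_of_mem (fun b _ => by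
              rintro ⟨-, h⟩; exact hnb b h.symm)]
          simp
        · rw [Finset.filter_false_of_mem (fun a _ => fun h => hna a h.symm),
            Finset.filter_false_of_mem (fun b _ => fun h => hnb b h.symm)]
          simp
    -- multiset-of-theories equalities
    have hmapth : ∀ r : P2,
        ((Finset.univ.filter (fun a => G.rel r u a)).val.map (theory G k)) =
        ((Finset.univ.filter (fun b => G'.rel r u' b)).val.map (theory G' k)) := by
      intro r
      rw [Multiset.ext]
      intro t
      rw [Multiset.count_map, Multiset.count_map]
      rw [← Finset.filter_val, ← Finset.filter_val, ← Finset.card_def, ← Finset.card_def,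
        Finset.filter_filter, Finset.filter_filter]
      exact (hcount t).1 r
    have hmapthg :
        ((Finset.univ : Finset G.V).val.map (theory G k)) =
        ((Finset.univ : Finset G'.V).val.map (theory G' k)) := by
      rw [Multiset.ext]
      intro t
      rw [Multiset.count_map, Multiset.count_map]
      rw [← Finset.filter_val, ← Finset.filter_val, ← Finset.card_def, ← Finset.card_def]
      exact (hcount t).2
    have h1 : f u = f' u' := ih G G' u u' hk X ι C
    have h2 : (fun r : P2 => (Finset.univ.filter (fun a => G.rel r u a)).val.map f) =
        (fun r : P2 => (Finset.univ.filter (fun b => G'.rel r u' b)).val.map f') := by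
      funext r
      calc ((Finset.univ.filter (fun a => G.rel r u a)).val.map f)
          = ((Finset.univ.filter (fun a => G.rel r u a)).val.map (F ∘ theory G k)) :=
            Multiset.map_congr rfl (fun a _ => hFa a)
        _ = (((Finset.univ.filter (fun a => G.rel r u a)).val.map (theory G k)).map F) := by
            rw [Multiset.map_map]
        _ = (((Finset.univ.filter (fun b => G'.rel r u' b)).val.map (theory G' k)).map F) := by
            rw [hmapth r]
        _ = ((Finset.univ.filter (fun b => G'.rel r u' b)).val.map (F ∘ theory G' k)) := by
            rw [Multiset.map_map]
        _ = ((Finset.univ.filter (fun b => G'.rel r u' b)).val.map f') :=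
            Multiset.map_congr rfl (fun b _ => (hFb b).symm)
    have h3 : ((Finset.univ : Finset G.V).val.map f) =
        ((Finset.univ : Finset G'.V).val.map f') := by
      calc ((Finset.univ : Finset G.V).val.map f)
          = ((Finset.univ : Finset G.V).val.map (F ∘ theory G k)) :=
            Multiset.map_congr rfl (fun a _ => hFa a)
        _ = (((Finset.univ : Finset G.V).val.map (theory G k)).map F) := by
            rw [Multiset.map_map]
        _ = (((Finset.univ : Finset G'.V).val.map (theory G' k)).map F) := by
            rw [hmapthg]
        _ = ((Finset.univ : Finset G'.V).val.map (F ∘ theory G' k)) := by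
            rw [Multiset.map_map]
        _ = ((Finset.univ : Finset G'.V).val.map f') :=
            Multiset.map_congr rfl (fun b _ => (hFb b).symm)
    rw [h1, h2, h3]

/-- If two nodes of graphs with at most `N` nodes satisfy exactly the same `FOC2`
formulas of quantifier depth at most `L`, then every R²-GNN with at most `L` layers
(arbitrary initialization encoding of the unary one-hot information and arbitrary
per-layer combination functions) assigns them the same feature. -/
theorem stmt12 {P1 P2 : Type} (N L : ℕ)
    (G1 G2 : MultiRelGraph P1 P2)
    (h1 : Fintype.card G1.V ≤ N) (h2 : Fintype.card G2.V ≤ N)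
    (v1 : G1.V) (v2 : G2.V)
    (hiff : ∀ φ : FOC2 P1 P2, φ.depth ≤ L → φ.freeVars ⊆ {Var.x} →
      (G1.sat (fun _ => v1) φ ↔ G2.sat (fun _ => v2) φ)) :
    ∀ (X : Type) (ι : (P1 → Bool) → X)
      (C : ℕ → X → (P2 → Multiset X) → Multiset X → X) (L' : ℕ), L' ≤ L →
      runGNN G1 (fun u => ι (fun p => decide (G1.unary p u))) C L' v1 =
        runGNN G2 (fun u => ι (fun p => decide (G2.unary p u))) C L' v2 := by
  intro X ι C L' hL'
  exact key L' G1 G2 v1 v2 (fun φ hd hf => hiff φ (hd.trans hL') hf) X ι C
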